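/- Let n ≥ 2, let H be an n×n real symmetric positive definite matrix, let Q_m be an n×n real matrix with Q_m + Q_mᵀ positive semidefinite, set Q_p = −Q_mᵀ, B = diag(−1,0,…,0,1), D_m = H⁻¹(Q_m + B/2), D_p = H⁻¹(Q_p + B/2). Let A_m = (1/2)[[1,1],[1,1]] and A_p = (1/2)[[−1,1],[1,−1]]. Let α₀ ≥ 0, α₁ ≤ 0, and let τ₁ ≤ 0, τ₃ ≤ 0, τ₂, τ₄ ∈ ℝ satisfy (α₀τ₁ − τ₂ − 1)² + 4α₀τ₁ ≤ 0 and (α₁τ₃ − τ₄ + 1)² − 4α₁τ₃ ≤ 0. Suppose w = (u, v) : ℝ → ℝⁿ × ℝⁿ is differentiable and satisfies w'(t) = −(A_p ⊗ D_p) w − (A_m ⊗ D_m) w + (τ₁ H⁻¹e₁ b₀(t), τ₂ H⁻¹e₁ b₀(t)) + (τ₃ H⁻¹eₙ b₁(t), τ₄ H⁻¹eₙ b₁(t)), where b₀(t) = u₁(t) + α₀ v₁(t), b₁(t) = uₙ(t) + α₁ vₙ(t), e₁ = (1,0,…,0)ᵀ, eₙ = (0,…,0,1)ᵀ, and ⊗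 is the Kronecker product. Then the discrete energy t ↦ u(t)ᵀHu(t) + v(t)ᵀHv(t) is nonincreasing. -/

import Mathlib

open Matrix Kronecker

private lemma bdry0 (a t1 t2 x y : ℝ) (ha : 0 ≤ a) (ht : t1 ≤ 0)
    (h : (a*t1 - t2 - 1)^2 + 4*a*t1 ≤ 0) :
    2*(x*y) + 2*(t1*x + t2*y)*(x + a*y) ≤ 0 := by
  rcases eq_or_lt_of_le ht with h0 | h0
  · have h1 : t1 = 0 := h0
    subst h1
    have h2 : t2 = -1 := by nlinarith [sq_nonneg (t2+1)]
    subst h2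
    nlinarith [mul_nonneg ha (sq_nonneg y)]
  · nlinarith [sq_nonneg (2*t1*x + (1 + a*t1 + t2)*y),
      mul_nonpos_of_nonpos_of_nonneg h (sq_nonneg y), h0]

private lemma bdry1 (a t3 t4 x y : ℝ) (ha : a ≤ 0) (ht : t3 ≤ 0)
    (h : (a*t3 - t4 + 1)^2 - 4*a*t3 ≤ 0) :
    -(2*(x*y)) + 2*(t3*x + t4*y)*(x + a*y) ≤ 0 := by
  rcases eq_or_lt_of_le ht with h0 | h0
  · have h1 : t3 = 0 := h0
    subst h1
    have h2 : t4 = 1 := by nlinarith [sq_nonneg (t4-1)]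
    subst h2
    nlinarith [mul_nonneg (neg_nonneg.mpr ha) (sq_nonneg y)]
  · nlinarith [sq_nonneg (2*t3*x + (a*t3 + t4 - 1)*y),
      mul_nonpos_of_nonpos_of_nonneg h (sq_nonneg y), h0]

private lemma dot_sym {n : ℕ} (M : Matrix (Fin n) (Fin n) ℝ) (x y : Fin n → ℝ) :
    x ⬝ᵥ (Mᵀ *ᵥ y) = y ⬝ᵥ (M *ᵥ x) := by
  simp only [dotProduct, Matrix.mulVec, Matrix.transpose_apply, Finset.mul_sum]
  rw [Finset.sum_comm]
  exact Finset.sum_congr rfl fun i _ => Finset.sum_congr rfl fun j _ => by ring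

private lemma Bdot {n : ℕ} {B : Matrix (Fin n) (Fin n) ℝ}
    (hB : B = Matrix.diagonal (fun i =>
      if i.val = 0 then (-1 : ℝ) else if i.val = n - 1 then 1 else 0))
    (hn : 2 ≤ n) (h0 : 0 < n) (h1 : n - 1 < n) (x y : Fin n → ℝ) :
    x ⬝ᵥ (B *ᵥ y) = -(x ⟨0, h0⟩ * y ⟨0, h0⟩) + x ⟨n-1, h1⟩ * y ⟨n-1, h1⟩ := by
  have hne : (⟨0, h0⟩ : Fin n) ≠ ⟨n-1, h1⟩ := by
    simp only [ne_eq, Fin.mk.injEq]; omega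
  rw [hB]
  simp only [dotProduct, Matrix.mulVec_diagonal]
  rw [← Finset.sum_subset (Finset.subset_univ ({⟨0, h0⟩, ⟨n-1, h1⟩} : Finset (Fin n)))
    (fun i _ hi => ?_), Finset.sum_pair hne]
  · have e0 : ((⟨0, h0⟩ : Fin n) : ℕ) = 0 := rfl
    have e1 : ((⟨n-1, h1⟩ : Fin n) : ℕ) = n-1 := rfl
    rw [e0, e1, if_pos rfl, if_neg (show ¬(n-1 = 0) by omega), if_pos rfl]
    ring
  · simp only [Finset.mem_insert, Finset.mem_singleton, Fin.ext_iff] at hi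
    push_neg at hi
    rw [if_neg (by simpa using hi.1), if_neg (by simpa using hi.2)]
    ring

private lemma edot {n : ℕ} (k : ℕ) (hk : k < n) {e : Fin n → ℝ}
    (he : e = fun i => if i.val = k then 1 else 0) (x : Fin n → ℝ) :
    x ⬝ᵥ e = x ⟨k, hk⟩ := by
  rw [he]
  simp only [dotProduct, mul_ite, mul_one, mul_zero]
  rw [Finset.sum_eq_single (⟨k, hk⟩ : Fin n)]
  · simp
  · intro i _ hi
    rw [if_neg (by simpa [Fin.ext_iff] using hi)]
  · simp

/-- Energy stability of the upwind SBP-SAT semidiscretization of the first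
order hyperbolic system `𝐔ₜ + A𝐔ₓ = 0`, `A = [[0,1],[1,0]]`, with the flux
splitting `A = Aₘ + Aₚ` and SAT penalties satisfying the stability
conditions: the discrete energy `uᵀHu + vᵀHv` is nonincreasing. -/
theorem stmt_6 (n : ℕ) (hn : 2 ≤ n)
    (H Qm : Matrix (Fin n) (Fin n) ℝ)
    (hH : H.PosDef) (hQ : (Qm + Qmᵀ).PosSemidef)
    (Qp B Dm Dp : Matrix (Fin n) (Fin n) ℝ)
    (hQp : Qp = -Qmᵀ)
    (hB : B = Matrix.diagonal (fun i =>
      if i.val = 0 then (-1 : ℝ) else if i.val = n - 1 then 1 else 0))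
    (hDm : Dm = H⁻¹ * (Qm + (1/2 : ℝ) • B))
    (hDp : Dp = H⁻¹ * (Qp + (1/2 : ℝ) • B))
    (Am Ap : Matrix (Fin 2) (Fin 2) ℝ)
    (hAm : Am = (1/2 : ℝ) • !![1, 1; 1, 1])
    (hAp : Ap = (1/2 : ℝ) • !![-1, 1; 1, -1])
    (α₀ α₁ τ₁ τ₂ τ₃ τ₄ : ℝ)
    (hα₀ : 0 ≤ α₀) (hα₁ : α₁ ≤ 0) (hτ₁ : τ₁ ≤ 0) (hτ₃ : τ₃ ≤ 0)
    (hst0 : (α₀*τ₁ - τ₂ - 1)^2 + 4*α₀*τ₁ ≤ 0)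
    (hst1 : (α₁*τ₃ - τ₄ + 1)^2 - 4*α₁*τ₃ ≤ 0)
    (e₁ eₙ : Fin n → ℝ)
    (he₁ : e₁ = fun i => if i.val = 0 then 1 else 0)
    (heₙ : eₙ = fun i => if i.val = n - 1 then 1 else 0)
    (w : ℝ → Fin 2 × Fin n → ℝ)
    (b₀ b₁ : ℝ → ℝ)
    (hb₀ : ∀ t, b₀ t = w t (0, ⟨0, by omega⟩) + α₀ * w t (1, ⟨0, by omega⟩))
    (hb₁ : ∀ t, b₁ t = w t (0, ⟨n - 1, by omega⟩) + α₁ * w t (1, ⟨n - 1, by omega⟩))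
    (hw : ∀ t : ℝ, HasDerivAt w
      (fun p => -(((Ap ⊗ₖ Dp) *ᵥ w t) p) - (((Am ⊗ₖ Dm) *ᵥ w t) p)
        + (if p.1 = 0 then τ₁ else τ₂) * b₀ t * (H⁻¹ *ᵥ e₁) p.2
        + (if p.1 = 0 then τ₃ else τ₄) * b₁ t * (H⁻¹ *ᵥ eₙ) p.2) t) :
    Antitone (fun t =>
      (fun j => w t (0, j)) ⬝ᵥ (H *ᵥ fun j => w t (0, j)) +
      (fun j => w t (1, j)) ⬝ᵥ (H *ᵥ fun j => w t (1, j))) := by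
  have hn0 : 0 < n := by omega
  have hn1 : n - 1 < n := by omega
  have hHsym : Hᵀ = H := hH.1
  have hHinv : H * H⁻¹ = 1 :=
    Matrix.mul_nonsing_inv H (isUnit_iff_ne_zero.mpr (ne_of_gt hH.det_pos))
  have hHDp : H * Dp = Qp + (1/2 : ℝ) • B := by
    rw [hDp, ← Matrix.mul_assoc, hHinv, Matrix.one_mul]
  have hHDm : H * Dm = Qm + (1/2 : ℝ) • B := by
    rw [hDm, ← Matrix.mul_assoc, hHinv, Matrix.one_mul]
  have hHdot : ∀ x y : Fin n → ℝ, x ⬝ᵥ (H *ᵥ y) = y ⬝ᵥ (H *ᵥ x) := fun x y => by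
    conv_lhs => rw [← hHsym]
    exact dot_sym H x y
  set F : ℝ → Fin 2 × Fin n → ℝ := fun t p =>
      -(((Ap ⊗ₖ Dp) *ᵥ w t) p) - (((Am ⊗ₖ Dm) *ᵥ w t) p)
        + (if p.1 = 0 then τ₁ else τ₂) * b₀ t * (H⁻¹ *ᵥ e₁) p.2
        + (if p.1 = 0 then τ₃ else τ₄) * b₁ t * (H⁻¹ *ᵥ eₙ) p.2 with hFdef
  have hwp : ∀ (t : ℝ) (p : Fin 2 × Fin n), HasDerivAt (fun s => w s p) (F t p) t :=
    fun t p => hasDerivAt_pi.mp (hw t) p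
  have hkey : ∀ (t : ℝ) (a b : Fin 2),
      HasDerivAt (fun s => (fun j => w s (a, j)) ⬝ᵥ (H *ᵥ fun j => w s (b, j)))
        ((fun j => F t (a, j)) ⬝ᵥ (H *ᵥ fun j => w t (b, j))
          + (fun j => w t (a, j)) ⬝ᵥ (H *ᵥ fun j => F t (b, j))) t := by
    intro t a b
    simp only [dotProduct, Matrix.mulVec, ← Finset.sum_add_distrib]
    exact HasDerivAt.fun_sum fun i _ =>
      (hwp t (a, i)).mul (HasDerivAt.fun_sum fun j _ => (hwp t (b, j)).const_mul (H i j))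
  have hE : ∀ t : ℝ, HasDerivAt (fun t =>
      (fun j => w t (0, j)) ⬝ᵥ (H *ᵥ fun j => w t (0, j)) +
      (fun j => w t (1, j)) ⬝ᵥ (H *ᵥ fun j => w t (1, j)))
      (((fun j => F t (0, j)) ⬝ᵥ (H *ᵥ fun j => w t (0, j))
          + (fun j => w t (0, j)) ⬝ᵥ (H *ᵥ fun j => F t (0, j)))
        + ((fun j => F t (1, j)) ⬝ᵥ (H *ᵥ fun j => w t (1, j))
          + (fun j => w t (1, j)) ⬝ᵥ (H *ᵥ fun j => F t (1, j)))) t :=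
    fun t => (hkey t 0 0).add (hkey t 1 1)
  apply antitone_of_deriv_nonpos (fun t => (hE t).differentiableAt)
  intro t
  rw [(hE t).deriv]
  rw [hHdot (fun j => F t (0, j)) (fun j => w t (0, j)),
      hHdot (fun j => F t (1, j)) (fun j => w t (1, j))]
  -- block splitting of the right-hand side
  have hF0 : (fun j => F t (0, j))
      = (1/2 : ℝ) • (Dp *ᵥ (fun j => w t (0, j)) - Dp *ᵥ (fun j => w t (1, j)))
        - (1/2 : ℝ) • (Dm *ᵥ (fun j => w t (0, j)) + Dm *ᵥ (fun j => w t (1, j)))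
        + (τ₁ * b₀ t) • (H⁻¹ *ᵥ e₁) + (τ₃ * b₁ t) • (H⁻¹ *ᵥ eₙ) := by
    funext j
    rw [hFdef]
    simp only [Pi.add_apply, Pi.sub_apply, Pi.smul_apply, smul_eq_mul,
      Matrix.mulVec, dotProduct, Matrix.kroneckerMap_apply, Fintype.sum_prod_type,
      Fin.sum_univ_two, hAp, hAm, Matrix.smul_apply, Matrix.cons_val', Matrix.cons_val_zero,
      Matrix.cons_val_one, Matrix.head_cons, Matrix.head_fin_const, Matrix.empty_val',
      Matrix.cons_val_fin_one, if_true, reduceIte, mul_assoc, ← Finset.mul_sum]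
    norm_num
    ring
  have hF1 : (fun j => F t (1, j))
      = -((1/2 : ℝ) • (Dp *ᵥ (fun j => w t (0, j)) - Dp *ᵥ (fun j => w t (1, j))))
        - (1/2 : ℝ) • (Dm *ᵥ (fun j => w t (0, j)) + Dm *ᵥ (fun j => w t (1, j)))
        + (τ₂ * b₀ t) • (H⁻¹ *ᵥ e₁) + (τ₄ * b₁ t) • (H⁻¹ *ᵥ eₙ) := by
    have h10 : ((1 : Fin 2) = 0) = False := by decide
    funext j
    rw [hFdef]
    simp only [h10, if_false, Pi.add_apply, Pi.sub_apply, Pi.neg_apply, Pi.smul_apply,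
      smul_eq_mul, Matrix.mulVec, dotProduct, Matrix.kroneckerMap_apply, Fintype.sum_prod_type,
      Fin.sum_univ_two, hAp, hAm, Matrix.smul_apply, Matrix.cons_val', Matrix.cons_val_zero,
      Matrix.cons_val_one, Matrix.head_cons, Matrix.head_fin_const, Matrix.empty_val',
      Matrix.cons_val_fin_one, mul_assoc, ← Finset.mul_sum]
    norm_num
    ring
  have hHF0 : H *ᵥ (fun j => F t (0, j))
      = (1/2 : ℝ) • ((Qp + (1/2 : ℝ) • B) *ᵥ (fun j => w t (0, j))
          - (Qp + (1/2 : ℝ) • B) *ᵥ (fun j => w t (1, j)))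
        - (1/2 : ℝ) • ((Qm + (1/2 : ℝ) • B) *ᵥ (fun j => w t (0, j))
          + (Qm + (1/2 : ℝ) • B) *ᵥ (fun j => w t (1, j)))
        + (τ₁ * b₀ t) • e₁ + (τ₃ * b₁ t) • eₙ := by
    rw [hF0]
    simp only [Matrix.mulVec_add, Matrix.mulVec_sub, Matrix.mulVec_smul,
      Matrix.mulVec_mulVec, hHDp, hHDm, hHinv, Matrix.one_mulVec]
  have hHF1 : H *ᵥ (fun j => F t (1, j))
      = -((1/2 : ℝ) • ((Qp + (1/2 : ℝ) • B) *ᵥ (fun j => w t (0, j))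
          - (Qp + (1/2 : ℝ) • B) *ᵥ (fun j => w t (1, j))))
        - (1/2 : ℝ) • ((Qm + (1/2 : ℝ) • B) *ᵥ (fun j => w t (0, j))
          + (Qm + (1/2 : ℝ) • B) *ᵥ (fun j => w t (1, j)))
        + (τ₂ * b₀ t) • e₁ + (τ₄ * b₁ t) • eₙ := by
    rw [hF1]
    simp only [Matrix.mulVec_add, Matrix.mulVec_sub, Matrix.mulVec_smul, Matrix.mulVec_neg,
      Matrix.mulVec_mulVec, hHDp, hHDm, hHinv, Matrix.one_mulVec]
  rw [hHF0, hHF1]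
  -- PSD facts
  have hpsd1 : 0 ≤ (fun j => w t (0, j)) ⬝ᵥ (Qm *ᵥ fun j => w t (0, j))
      - (fun j => w t (0, j)) ⬝ᵥ (Qm *ᵥ fun j => w t (1, j))
      - (fun j => w t (1, j)) ⬝ᵥ (Qm *ᵥ fun j => w t (0, j))
      + (fun j => w t (1, j)) ⬝ᵥ (Qm *ᵥ fun j => w t (1, j)) := by
    have h := hQ.dotProduct_mulVec_nonneg ((fun j => w t (0, j)) - (fun j => w t (1, j)))
    rw [star_trivial] at h
    simp only [Matrix.add_mulVec, Matrix.mulVec_sub, sub_dotProduct, dotProduct_sub,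
      dotProduct_add, dot_sym Qm] at h
    linarith
  have hpsd2 : 0 ≤ (fun j => w t (0, j)) ⬝ᵥ (Qm *ᵥ fun j => w t (0, j))
      + (fun j => w t (0, j)) ⬝ᵥ (Qm *ᵥ fun j => w t (1, j))
      + (fun j => w t (1, j)) ⬝ᵥ (Qm *ᵥ fun j => w t (0, j))
      + (fun j => w t (1, j)) ⬝ᵥ (Qm *ᵥ fun j => w t (1, j)) := by
    have h := hQ.dotProduct_mulVec_nonneg ((fun j => w t (0, j)) + (fun j => w t (1, j)))
    rw [star_trivial] at h
    simp only [Matrix.add_mulVec, Matrix.mulVec_add, add_dotProduct, dotProduct_add,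
      dot_sym Qm] at h
    linarith
  -- boundary facts
  have hbU0 : b₀ t = (fun j => w t (0, j)) ⟨0, hn0⟩ + α₀ * (fun j => w t (1, j)) ⟨0, hn0⟩ :=
    hb₀ t
  have hbU1 : b₁ t = (fun j => w t (0, j)) ⟨n-1, hn1⟩ + α₁ * (fun j => w t (1, j)) ⟨n-1, hn1⟩ :=
    hb₁ t
  have hbd0 := bdry0 α₀ τ₁ τ₂ ((fun j => w t (0, j)) ⟨0, hn0⟩) ((fun j => w t (1, j)) ⟨0, hn0⟩)
    hα₀ hτ₁ hst0
  have hbd1 := bdry1 α₁ τ₃ τ₄ ((fun j => w t (0, j)) ⟨n-1, hn1⟩)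
    ((fun j => w t (1, j)) ⟨n-1, hn1⟩) hα₁ hτ₃ hst1
  -- expand everything into scalars
  simp only [hQp, Matrix.add_mulVec, Matrix.smul_mulVec, Matrix.neg_mulVec,
    dotProduct_add, dotProduct_sub, dotProduct_neg, dotProduct_smul, smul_eq_mul,
    dot_sym Qm, Bdot hB hn hn0 hn1, edot 0 hn0 he₁, edot (n-1) hn1 heₙ]
  rw [hbU0, hbU1]
  simp only at hbd0 hbd1 hpsd1 hpsd2 ⊢
  nlinarith [hbd0, hbd1, hpsd1, hpsd2]
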